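/- Let pᵢ (0 ≤ i ≤ s) and q_j (0 ≤ j ≤ t) be elements of ℂ[[x,y]]. Then dim_ℂ ℂ[[x,y]]/(∏ᵢ pᵢ, ∏_j q_j) = Σᵢ Σ_j dim_ℂ ℂ[[x,y]]/(pᵢ, q_j), as elements of ℕ∪{∞}. -/

import Mathlib

open MvPowerSeries

/-- The formal power series ring `ℂ[[x,y]]`. -/
noncomputable abbrev CXY : Type := MvPowerSeries (Fin 2) ℂ

/-- The dimension of `ℂ[[x,y]] / I` as a `ℂ`-vector space, in `ℕ∞`. -/
noncomputable def dimCXY (I : Ideal CXY) : ℕ∞ :=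
  (Module.rank ℂ (CXY ⧸ I)).toENat

lemma X_ne_zero' (s : Fin 2) : (X s : CXY) ≠ 0 := by
  intro h
  have h2 := congrArg (MvPowerSeries.coeff (Finsupp.single s 1)) h
  rw [MvPowerSeries.coeff_X, if_pos rfl, map_zero] at h2
  exact one_ne_zero h2

open Cardinal in
lemma rank_mono_CXY {I J : Ideal CXY} (h : I ≤ J) :
    Module.rank ℂ (CXY ⧸ J) ≤ Module.rank ℂ (CXY ⧸ I) := by
  let f : CXY ⧸ I →ₐ[ℂ] CXY ⧸ J :=
    Ideal.Quotient.liftₐ I (Ideal.Quotient.mkₐ ℂ J)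
      (fun x hx => by
        rw [Ideal.Quotient.mkₐ_eq_mk]
        exact Ideal.Quotient.eq_zero_iff_mem.mpr (h hx))
  have hs : Function.Surjective f := by
    intro x
    obtain ⟨y, rfl⟩ := Ideal.Quotient.mk_surjective x
    exact ⟨Ideal.Quotient.mk I y, by simp [f, Ideal.Quotient.liftₐ_apply]; rfl⟩
  exact LinearMap.rank_le_of_surjective f.toLinearMap hs

lemma dim_mono_CXY {I J : Ideal CXY} (h : I ≤ J) : dimCXY J ≤ dimCXY I :=
  Cardinal.toENat.monotone' (rank_mono_CXY h)

/-- Core divisibility lemma: if `c ∣ x·u` and `c ∣ y^r·u` then `c ∣ u`. -/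
lemma dvd_of_dvd_X_mul {c u : CXY} (hc : c ≠ 0) {r : ℕ}
    (h1 : c ∣ X (0 : Fin 2) * u) (h2 : c ∣ X (1 : Fin 2) ^ r * u) : c ∣ u := by
  obtain ⟨q, hq⟩ := h1
  obtain ⟨p, hp⟩ := h2
  have key : X (0 : Fin 2) * p = X (1 : Fin 2) ^ r * q := by
    refine mul_left_cancel₀ hc ?_
    have : X (0 : Fin 2) * (c * p) = X (1 : Fin 2) ^ r * (c * q) := by
      rw [← hp, ← hq]; ring
    calc c * (X (0 : Fin 2) * p) = X (0 : Fin 2) * (c * p) := by ring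
      _ = X (1 : Fin 2) ^ r * (c * q) := this
      _ = c * (X (1 : Fin 2) ^ r * q) := by ring
  have hdvd : X (0 : Fin 2) ∣ q := by
    rw [MvPowerSeries.X_dvd_iff]
    intro m hm
    have h0 : (MvPowerSeries.coeff (m + Finsupp.single 1 r)) (X (0 : Fin 2) * p) = 0 := by
      rw [MvPowerSeries.X_def, MvPowerSeries.coeff_monomial_mul, if_neg]
      intro hle
      have := (Finsupp.single_le_iff).mp hle
      simp [hm] at this
    have h1' : (MvPowerSeries.coeff (m + Finsupp.single 1 r)) (X (1 : Fin 2) ^ r * q)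
        = MvPowerSeries.coeff m q := by
      rw [MvPowerSeries.X_pow_eq, MvPowerSeries.coeff_monomial_mul, if_pos le_add_self,
        one_mul, add_tsub_cancel_right]
    rw [← h1', ← key, h0]
  obtain ⟨q', rfl⟩ := hdvd
  refine ⟨q', mul_left_cancel₀ (X_ne_zero' 0) ?_⟩
  calc X (0 : Fin 2) * u = c * (X (0 : Fin 2) * q') := hq
    _ = X (0 : Fin 2) * (c * q') := by ring

lemma dvd_of_pows {c z : CXY} (hc : c ≠ 0) {r : ℕ} :
    ∀ m : ℕ, c ∣ X (0 : Fin 2) ^ m * z → c ∣ X (1 : Fin 2) ^ r * z → c ∣ z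
  | 0, h1, _ => by simpa using h1
  | (m + 1), h1, h2 => by
    have hu : c ∣ X (0 : Fin 2) * (X (0 : Fin 2) ^ m * z) := by
      have : X (0 : Fin 2) * (X (0 : Fin 2) ^ m * z) = X (0 : Fin 2) ^ (m + 1) * z := by ring
      rw [this]; exact h1
    have h2' : c ∣ X (1 : Fin 2) ^ r * (X (0 : Fin 2) ^ m * z) := by
      have : X (1 : Fin 2) ^ r * (X (0 : Fin 2) ^ m * z)
          = X (0 : Fin 2) ^ m * (X (1 : Fin 2) ^ r * z) := by ring
      rw [this]; exact h2.mul_left _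
    exact dvd_of_pows hc m (dvd_of_dvd_X_mul hc hu h2') h2

open Cardinal in
lemma exists_pow_mem {I : Ideal CXY} (h : Module.rank ℂ (CXY ⧸ I) < ℵ₀) (s : Fin 2) :
    ∃ m : ℕ, X s ^ m ∈ I := by
  classical
  set φ : Polynomial ℂ →ₐ[ℂ] CXY ⧸ I :=
    (Ideal.Quotient.mkₐ ℂ I).comp (Polynomial.aeval (X s)) with hφ
  have hninj : ¬ Function.Injective φ := by
    intro hinj
    have hb : LinearIndependent ℂ (φ ∘ (Polynomial.basisMonomials ℂ)) :=
      (Polynomial.basisMonomials ℂ).linearIndependent.map' φ.toLinearMap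
        (LinearMap.ker_eq_bot.mpr hinj)
    exact absurd hb.aleph0_le_rank (not_le.mpr h)
  rw [Function.not_injective_iff] at hninj
  obtain ⟨f, g, hfg, hne⟩ := hninj
  set p : Polynomial ℂ := f - g with hpdef
  have hp0 : p ≠ 0 := sub_ne_zero.mpr hne
  have hφp : φ p = 0 := by rw [hpdef, map_sub, hfg, sub_self]
  have hmem : Polynomial.aeval (X s : CXY) p ∈ I := by
    rw [← Ideal.Quotient.eq_zero_iff_mem]
    have : φ p = Ideal.Quotient.mk I (Polynomial.aeval (X s : CXY) p) := by
      rw [hφ]; rfl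
    rw [← this, hφp]
  obtain ⟨q, hq, hndvd⟩ := p.exists_eq_pow_rootMultiplicity_mul_and_not_dvd hp0 0
  rw [map_zero, sub_zero] at hq hndvd
  set m := p.rootMultiplicity 0
  -- the constant coefficient of `aeval (X s) q` is `q.coeff 0 ≠ 0`, so it is a unit
  have hconst : MvPowerSeries.constantCoeff (Polynomial.aeval (X s : CXY) q)
      = q.coeff 0 := by
    let ψ : CXY →ₐ[ℂ] ℂ :=
      { toFun := MvPowerSeries.constantCoeff
        map_one' := map_one _
        map_mul' := map_mul _
        map_zero' := map_zero _
        map_add' := map_add _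
        commutes' := fun r => by simp [MvPowerSeries.algebraMap_apply] }
    have : ψ (Polynomial.aeval (X s : CXY) q) = Polynomial.aeval (ψ (X s)) q :=
      (Polynomial.aeval_algHom_apply ψ (X s) q).symm
    have hψX : ψ (X s) = 0 := MvPowerSeries.constantCoeff_X s
    rw [show MvPowerSeries.constantCoeff (Polynomial.aeval (X s : CXY) q)
        = ψ (Polynomial.aeval (X s : CXY) q) from rfl, this, hψX]
    simp [Polynomial.aeval_def, Polynomial.eval₂_at_zero, Polynomial.coeff_zero_eq_eval_zero]
  have hc0 : q.coeff 0 ≠ 0 := fun hc => hndvd (Polynomial.X_dvd_iff.mpr hc)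
  have hunit : IsUnit (Polynomial.aeval (X s : CXY) q) := by
    rw [MvPowerSeries.isUnit_iff_constantCoeff, hconst]
    exact hc0.isUnit
  obtain ⟨u, hu⟩ := hunit
  refine ⟨m, ?_⟩
  have hXm : (X s : CXY) ^ m = Polynomial.aeval (X s : CXY) p * ↑u⁻¹ := by
    have : Polynomial.aeval (X s : CXY) p = (X s : CXY) ^ m * ↑u := by
      rw [hq, map_mul, map_pow, Polynomial.aeval_X, hu]
    rw [this, mul_assoc, Units.mul_inv, mul_one]
  rw [hXm]
  exact I.mul_mem_right _ hmem

open Cardinal in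
/-- Regularity: if `ℂ[[x,y]]/(b,c)` is finite dimensional, then `b` is regular mod `c`. -/
lemma reg {b c : CXY} (h : Module.rank ℂ (CXY ⧸ Ideal.span {b, c}) < ℵ₀) :
    ∀ z : CXY, c ∣ b * z → c ∣ z := by
  obtain ⟨m, hm⟩ := exists_pow_mem h 0
  obtain ⟨r, hr⟩ := exists_pow_mem h 1
  intro z hz
  by_cases hc : c = 0
  · subst hc
    have hbz : b * z = 0 := zero_dvd_iff.mp hz
    by_cases hb : b = 0
    · subst hb
      exfalso
      have : ({(0 : CXY), 0} : Set CXY) = {0} := by simp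
      rw [this, Ideal.span_singleton_eq_bot.mpr rfl, Ideal.mem_bot] at hm
      exact pow_ne_zero m (X_ne_zero' 0) hm
    · have : z = 0 := by
        rcases mul_eq_zero.mp hbz with h' | h'
        · exact absurd h' hb
        · exact h'
      rw [this]
  · obtain ⟨α, β, hαβ⟩ := Ideal.mem_span_pair.mp hm
    obtain ⟨γ, δ, hγδ⟩ := Ideal.mem_span_pair.mp hr
    have h1 : c ∣ X (0 : Fin 2) ^ m * z := by
      rw [← hαβ]
      have : (α * b + β * c) * z = α * (b * z) + (β * z) * c := by ring
      rw [this]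
      exact dvd_add (hz.mul_left α) (Dvd.intro_left _ rfl)
    have h2 : c ∣ X (1 : Fin 2) ^ r * z := by
      rw [← hγδ]
      have : (γ * b + δ * c) * z = γ * (b * z) + (δ * z) * c := by ring
      rw [this]
      exact dvd_add (hz.mul_left γ) (Dvd.intro_left _ rfl)
    exact dvd_of_pows hc m h1 h2

set_option maxHeartbeats 2000000 in
set_option synthInstance.maxHeartbeats 200000 in
open Cardinal in
/-- The key additivity lemma. -/
lemma key_add (a b c : CXY) :
    dimCXY (Ideal.span {a * b, c}) = dimCXY (Ideal.span {a, c}) + dimCXY (Ideal.span {b, c}) := by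
  classical
  set I : Ideal CXY := Ideal.span {a * b, c} with hI
  set A : Ideal CXY := Ideal.span {a, c} with hA
  set B : Ideal CXY := Ideal.span {b, c} with hB
  have hIA : I ≤ A := by
    rw [hI, Ideal.span_le]
    rintro x (rfl | rfl)
    · exact A.mul_mem_right b (Ideal.subset_span (by simp))
    · exact Ideal.subset_span (by simp)
  have hIB : I ≤ B := by
    rw [hI, Ideal.span_le]
    rintro x (rfl | rfl)
    · have hb : b ∈ B := Ideal.subset_span (by simp)
      exact B.mul_mem_left a hb
    · exact Ideal.subset_span (by simp)
  by_cases hfin : Module.rank ℂ (CXY ⧸ B) < ℵ₀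
  · -- finite case: exact sequence argument
    let π : CXY ⧸ I →ₐ[ℂ] CXY ⧸ B :=
      Ideal.Quotient.liftₐ I (Ideal.Quotient.mkₐ ℂ B)
        (fun x hx => by
          rw [Ideal.Quotient.mkₐ_eq_mk]
          exact Ideal.Quotient.eq_zero_iff_mem.mpr (hIB hx))
    have hπmk : ∀ x : CXY, π (Ideal.Quotient.mk I x) = Ideal.Quotient.mk B x := fun x => by
      simp [π, Ideal.Quotient.liftₐ_apply]; rfl
    have hπs : Function.Surjective π := by
      intro x
      obtain ⟨y, rfl⟩ := Ideal.Quotient.mk_surjective x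
      exact ⟨Ideal.Quotient.mk I y, hπmk y⟩
    let ψ : CXY →ₗ[ℂ] CXY ⧸ I :=
      (Ideal.Quotient.mkₐ ℂ I).toLinearMap.comp (LinearMap.mulRight ℂ b)
    have hψ : ∀ x : CXY, ψ x = Ideal.Quotient.mk I (x * b) := fun x => rfl
    have hker : LinearMap.ker π.toLinearMap = LinearMap.range ψ := by
      ext x
      simp only [LinearMap.mem_ker, LinearMap.mem_range]
      constructor
      · intro hx
        obtain ⟨z, rfl⟩ := Ideal.Quotient.mk_surjective x
        rw [AlgHom.toLinearMap_apply, hπmk, Ideal.Quotient.eq_zero_iff_mem] at hx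
        obtain ⟨u, v, huv⟩ := Ideal.mem_span_pair.mp hx
        refine ⟨u, ?_⟩
        rw [hψ, Ideal.Quotient.mk_eq_mk_iff_sub_mem]
        have : u * b - z = (-v) * c := by rw [← huv]; ring
        rw [this]
        exact I.mul_mem_left _ (Ideal.subset_span (by simp))
      · rintro ⟨y, rfl⟩
        rw [hψ, AlgHom.toLinearMap_apply, hπmk, Ideal.Quotient.eq_zero_iff_mem]
        exact B.mul_mem_left y (Ideal.subset_span (by simp))
    have hkerψ : LinearMap.ker ψ = A.restrictScalars ℂ := by
      ext x
      simp only [LinearMap.mem_ker, Submodule.restrictScalars_mem]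
      rw [hψ, Ideal.Quotient.eq_zero_iff_mem]
      constructor
      · intro hx
        obtain ⟨u, v, huv⟩ := Ideal.mem_span_pair.mp hx
        have hdvd : c ∣ b * (x - u * a) := by
          refine ⟨v, ?_⟩
          have : x * b - u * (a * b) = v * c := by rw [← huv]; ring
          calc b * (x - u * a) = x * b - u * (a * b) := by ring
            _ = v * c := this
            _ = c * v := by ring
        obtain ⟨w, hw⟩ := reg hfin _ hdvd
        rw [hA, Ideal.mem_span_pair]
        exact ⟨u, w, by linear_combination -hw⟩
      · intro hx
        obtain ⟨u, v, huv⟩ := Ideal.mem_span_pair.mp hx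
        rw [hI, Ideal.mem_span_pair]
        exact ⟨u, v * b, by rw [← huv]; ring⟩
    have e1 : Module.rank ℂ (CXY ⧸ I)
        = Module.rank ℂ ((CXY ⧸ I) ⧸ LinearMap.ker π.toLinearMap)
          + Module.rank ℂ (LinearMap.ker π.toLinearMap) :=
      (Submodule.rank_quotient_add_rank _).symm
    have e2 : Module.rank ℂ ((CXY ⧸ I) ⧸ LinearMap.ker π.toLinearMap)
        = Module.rank ℂ (CXY ⧸ B) :=
      (LinearMap.quotKerEquivOfSurjective π.toLinearMap hπs).rank_eq
    have e3 : Module.rank ℂ (LinearMap.ker π.toLinearMap) = Module.rank ℂ (CXY ⧸ A) := by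
      rw [hker]
      rw [← ψ.quotKerEquivRange.rank_eq, hkerψ,
        (Submodule.Quotient.restrictScalarsEquiv ℂ A).rank_eq]
    simp only [dimCXY]
    rw [e1, e2, e3, map_add, add_comm]
  · -- infinite case
    have hBtop : dimCXY B = ⊤ := by
      rw [dimCXY, Cardinal.toENat_eq_top]
      exact not_lt.mp hfin
    have hItop : dimCXY I = ⊤ := by
      have := dim_mono_CXY hIB
      rw [hBtop] at this
      exact top_le_iff.mp this
    rw [hItop, hBtop, add_top]

lemma dim_pair_comm (u v : CXY) :
    dimCXY (Ideal.span {u, v}) = dimCXY (Ideal.span {v, u}) := by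
  rw [Set.pair_comm]

lemma prod_left (Q : CXY) : ∀ (s : ℕ) (p : Fin (s + 1) → CXY),
    dimCXY (Ideal.span {∏ i, p i, Q}) = ∑ i, dimCXY (Ideal.span {p i, Q})
  | 0, p => by simp
  | (s + 1), p => by
    rw [Fin.prod_univ_succ, key_add, prod_left Q s (fun i => p i.succ)]
    conv_rhs => rw [Fin.sum_univ_succ]

/-- For `pᵢ (0 ≤ i ≤ s)` and `q_j (0 ≤ j ≤ t)` in `ℂ[[x,y]]`:
`dim_ℂ ℂ[[x,y]]/(∏ᵢ pᵢ, ∏_j q_j) = Σᵢ Σ_j dim_ℂ ℂ[[x,y]]/(pᵢ, q_j)` in `ℕ∞`. -/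
theorem stmt2 (s t : ℕ) (p : Fin (s + 1) → CXY) (q : Fin (t + 1) → CXY) :
    dimCXY (Ideal.span {∏ i, p i, ∏ j, q j}) =
      ∑ i, ∑ j, dimCXY (Ideal.span {p i, q j}) := by
  rw [prod_left]
  refine Finset.sum_congr rfl fun i _ => ?_
  rw [dim_pair_comm, prod_left]
  exact Finset.sum_congr rfl fun j _ => dim_pair_comm _ _
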